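/- Let L be a finite-dimensional Lie algebra over a field k, and let D be a Lie algebra whose underlying vector space is L ⊕ L*, such that [(X,0),(Y,0)] = ([X,Y],0) for all X,Y ∈ L, [(0,f),(0,g)] = (0,[f,g]*) for some Lie bracket [·,·]* on L*, and such that the symmetric bilinear form ⟨(X,f),(Y,g)⟩ = f(Y)+g(X) satisfies ⟨[A,B],C⟩ = ⟨A,[B,C]⟩ for all A,B,C ∈ D. Let {X₁,…,X_N} be a basis of L and {f¹,…,f^N} the dual basis of L*, and let ι : D → U(D) be the canonical embedding of D into its universal enveloping algebra. Then the canonical element r = Σᵢ ι(Xᵢ,0) ⊗ ι(0,fⁱ) ∈ U(D) ⊗ U(D) satisfies the classical Yang–Baxter equation [r₁₂, r₁₃] + [r₁₂, r₂₃] + [r₁₃, r₂₃] = 0 in U(D) ⊗ U(D) ⊗ U(D). -/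

import Mathlib

open scoped TensorProduct

theorem CYBE_swap23 {I M : Type*} [Fintype I] [AddCommMonoid M] (F : I → I → I → M) :
    ∑ i : I, ∑ j : I, ∑ kk : I, F i j kk = ∑ i : I, ∑ j : I, ∑ kk : I, F i kk j :=
  Finset.sum_congr rfl fun _ _ => Finset.sum_comm

theorem CYBE_swap13 {I M : Type*} [Fintype I] [AddCommMonoid M] (F : I → I → I → M) :
    ∑ i : I, ∑ j : I, ∑ kk : I, F i j kk = ∑ i : I, ∑ j : I, ∑ kk : I, F kk j i :=
  calc ∑ i : I, ∑ j : I, ∑ kk : I, F i j kk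
      = ∑ j : I, ∑ i : I, ∑ kk : I, F i j kk := Finset.sum_comm
    _ = ∑ j : I, ∑ kk : I, ∑ i : I, F i j kk :=
        Finset.sum_congr rfl fun _ _ => Finset.sum_comm
    _ = ∑ kk : I, ∑ j : I, ∑ i : I, F i j kk := Finset.sum_comm

theorem CYBE_LL_aux
    (k : Type*) [Field k]
    (L : Type*) [LieRing L] [LieAlgebra k L] [FiniteDimensional k L]
    (D : Type*) [LieRing D] [LieAlgebra k D]
    (e : D ≃ₗ[k] L × Module.Dual k L)
    (hL : ∀ X Y : L, ⁅e.symm (X, 0), e.symm (Y, 0)⁆ = e.symm (⁅X, Y⁆, 0))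
    (I : Type*) [Fintype I] [DecidableEq I] (b : Module.Basis I k L) (i j : I) :
    ⁅e.symm (b i, 0), e.symm (b j, 0)⁆
      = ∑ kk : I, b.dualBasis kk ⁅b i, b j⁆ • e.symm (b kk, 0) := by
  set el : L →ₗ[k] D := e.symm.toLinearMap ∘ₗ LinearMap.inl k L (Module.Dual k L) with hel
  have hl : ∀ x : L, e.symm (x, 0) = el x := fun x => by simp [hel]
  rw [hL]
  simp only [hl]
  have hexp : (⁅b i, b j⁆ : L) = ∑ kk : I, b.dualBasis kk ⁅b i, b j⁆ • b kk := by
    conv_lhs => rw [← b.sum_repr ⁅b i, b j⁆]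
    simp only [Module.Basis.coe_dualBasis, Module.Basis.coord_apply]
  conv_lhs => rw [hexp]
  rw [map_sum]
  simp only [map_smul]

theorem CYBE_FF_aux
    (k : Type*) [Field k]
    (L : Type*) [LieRing L] [LieAlgebra k L] [FiniteDimensional k L]
    (D : Type*) [LieRing D] [LieAlgebra k D]
    (e : D ≃ₗ[k] L × Module.Dual k L)
    (bra : Module.Dual k L → Module.Dual k L → Module.Dual k L)
    (hdual : ∀ f g : Module.Dual k L,
      ⁅e.symm (0, f), e.symm (0, g)⁆ = e.symm (0, bra f g))
    (I : Type*) [Fintype I] [DecidableEq I] (b : Module.Basis I k L) (i j : I) :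
    ⁅e.symm (0, b.dualBasis i), e.symm (0, b.dualBasis j)⁆
      = ∑ kk : I, bra (b.dualBasis i) (b.dualBasis j) (b kk) • e.symm (0, b.dualBasis kk) := by
  set ed : Module.Dual k L →ₗ[k] D :=
    e.symm.toLinearMap ∘ₗ LinearMap.inr k L (Module.Dual k L) with hed
  have hd : ∀ f : Module.Dual k L, e.symm (0, f) = ed f := fun f => by simp [hed]
  rw [hdual]
  simp only [hd]
  have hexp : bra (b.dualBasis i) (b.dualBasis j)
      = ∑ kk : I, bra (b.dualBasis i) (b.dualBasis j) (b kk) • b.dualBasis kk := by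
    conv_lhs => rw [← b.dualBasis.sum_repr (bra (b.dualBasis i) (b.dualBasis j))]
    simp only [Module.Basis.dualBasis_repr]
  conv_lhs => rw [hexp]
  rw [map_sum]
  simp only [map_smul]

theorem CYBE_FL_aux
    (k : Type*) [Field k]
    (L : Type*) [LieRing L] [LieAlgebra k L] [FiniteDimensional k L]
    (D : Type*) [LieRing D] [LieAlgebra k D]
    (e : D ≃ₗ[k] L × Module.Dual k L)
    (hL : ∀ X Y : L, ⁅e.symm (X, 0), e.symm (Y, 0)⁆ = e.symm (⁅X, Y⁆, 0))
    (bra : Module.Dual k L → Module.Dual k L → Module.Dual k L)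
    (hdual : ∀ f g : Module.Dual k L,
      ⁅e.symm (0, f), e.symm (0, g)⁆ = e.symm (0, bra f g))
    (hinv : ∀ A B C : D,
      (e ⁅A, B⁆).2 (e C).1 + (e C).2 (e ⁅A, B⁆).1
        = (e A).2 (e ⁅B, C⁆).1 + (e ⁅B, C⁆).2 (e A).1)
    (I : Type*) [Fintype I] [DecidableEq I] (b : Module.Basis I k L) (i j : I) :
    ⁅e.symm (0, b.dualBasis i), e.symm (b j, 0)⁆
      = ∑ kk : I, bra (b.dualBasis kk) (b.dualBasis i) (b j) • e.symm (b kk, 0)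
        + ∑ kk : I, b.dualBasis i ⁅b j, b kk⁆ • e.symm (0, b.dualBasis kk) := by
  set d : D := ⁅e.symm (0, b.dualBasis i), e.symm (b j, 0)⁆ with hd
  have c1 : ∀ kk : I, b.dualBasis kk ((e d).1)
      = bra (b.dualBasis kk) (b.dualBasis i) (b j) := by
    intro kk
    have h := hinv (e.symm (0, b.dualBasis kk)) (e.symm (0, b.dualBasis i)) (e.symm (b j, 0))
    rw [hdual] at h
    simp only [LinearEquiv.apply_symm_apply, map_zero, LinearMap.zero_apply, add_zero,
      zero_add, ← hd] at h
    exact h.symm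
  have c2 : ∀ kk : I, (e d).2 (b kk) = b.dualBasis i ⁅b j, b kk⁆ := by
    intro kk
    have h := hinv (e.symm (0, b.dualBasis i)) (e.symm (b j, 0)) (e.symm (b kk, 0))
    rw [hL] at h
    simp only [LinearEquiv.apply_symm_apply, map_zero, LinearMap.zero_apply, add_zero,
      zero_add, ← hd] at h
    exact h
  have hsplit : d = e.symm ((e d).1, 0) + e.symm (0, (e d).2) := by
    rw [← map_add]
    simp
  rw [hsplit]
  have h1 : e.symm ((e d).1, (0 : Module.Dual k L))
      = ∑ kk : I, bra (b.dualBasis kk) (b.dualBasis i) (b j) • e.symm (b kk, 0) := by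
    have hexp : (e d).1 = ∑ kk : I, b.dualBasis kk ((e d).1) • b kk := by
      conv_lhs => rw [← b.sum_repr (e d).1]
      simp only [Module.Basis.coe_dualBasis, Module.Basis.coord_apply]
    set el : L →ₗ[k] D := e.symm.toLinearMap ∘ₗ LinearMap.inl k L (Module.Dual k L) with hel
    have hl : ∀ x : L, e.symm (x, 0) = el x := fun x => by simp [hel]
    simp only [hl]
    conv_lhs => rw [hexp]
    rw [map_sum]
    simp only [map_smul, c1]
  have h2 : e.symm ((0 : L), (e d).2)
      = ∑ kk : I, b.dualBasis i ⁅b j, b kk⁆ • e.symm (0, b.dualBasis kk) := by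
    have hexp : (e d).2 = ∑ kk : I, (e d).2 (b kk) • b.dualBasis kk := by
      conv_lhs => rw [← b.dualBasis.sum_repr (e d).2]
      simp only [Module.Basis.dualBasis_repr]
    set ed : Module.Dual k L →ₗ[k] D :=
      e.symm.toLinearMap ∘ₗ LinearMap.inr k L (Module.Dual k L) with hed
    have hdd : ∀ f : Module.Dual k L, e.symm (0, f) = ed f := fun f => by simp [hed]
    simp only [hdd]
    conv_lhs => rw [hexp]
    rw [map_sum]
    simp only [map_smul, c2]
  rw [h1, h2]

/-- The canonical element `r = Σᵢ ι(Xᵢ,0) ⊗ ι(0,fⁱ)` of the double Lie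
algebra `D` (a Lie algebra whose underlying vector space is `L ⊕ L*`, containing `L`
and `L*` as subalgebras and with invariant canonical pairing), viewed inside
`U(D) ⊗ U(D)`, satisfies the classical Yang–Baxter equation. -/
theorem canonical_element_satisfies_CYBE
    (k : Type*) [Field k]
    (L : Type*) [LieRing L] [LieAlgebra k L] [FiniteDimensional k L]
    (D : Type*) [LieRing D] [LieAlgebra k D]
    -- `D` has underlying vector space `L ⊕ L*`:
    (e : D ≃ₗ[k] L × Module.Dual k L)
    -- `L` is a Lie subalgebra of `D`:
    (hL : ∀ X Y : L, ⁅e.symm (X, 0), e.symm (Y, 0)⁆ = e.symm (⁅X, Y⁆, 0))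
    -- `L*` is a Lie subalgebra of `D`, for some bracket `bra` on `L*`:
    (bra : Module.Dual k L → Module.Dual k L → Module.Dual k L)
    (hdual : ∀ f g : Module.Dual k L,
      ⁅e.symm (0, f), e.symm (0, g)⁆ = e.symm (0, bra f g))
    -- invariance of the pairing `⟨(X,f),(Y,g)⟩ = f Y + g X`:
    (hinv : ∀ A B C : D,
      (e ⁅A, B⁆).2 (e C).1 + (e C).2 (e ⁅A, B⁆).1
        = (e A).2 (e ⁅B, C⁆).1 + (e ⁅B, C⁆).2 (e A).1)
    -- a basis of `L` (with its dual basis of `L*`):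
    (I : Type*) [Fintype I] [DecidableEq I] (b : Module.Basis I k L)
    -- the components of the canonical element `r = Σᵢ ι(Xᵢ,0) ⊗ ι(0,fⁱ)`:
    (r12 r13 r23 : UniversalEnvelopingAlgebra k D ⊗[k]
      (UniversalEnvelopingAlgebra k D ⊗[k] UniversalEnvelopingAlgebra k D))
    (hr12 : r12 = ∑ i : I,
      (UniversalEnvelopingAlgebra.ι k (e.symm (b i, 0)) ⊗ₜ[k]
        (UniversalEnvelopingAlgebra.ι k (e.symm (0, b.dualBasis i)) ⊗ₜ[k] 1)))
    (hr13 : r13 = ∑ i : I,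
      (UniversalEnvelopingAlgebra.ι k (e.symm (b i, 0)) ⊗ₜ[k]
        ((1 : UniversalEnvelopingAlgebra k D) ⊗ₜ[k]
          UniversalEnvelopingAlgebra.ι k (e.symm (0, b.dualBasis i)))))
    (hr23 : r23 = ∑ i : I,
      ((1 : UniversalEnvelopingAlgebra k D) ⊗ₜ[k]
        (UniversalEnvelopingAlgebra.ι k (e.symm (b i, 0)) ⊗ₜ[k]
          UniversalEnvelopingAlgebra.ι k (e.symm (0, b.dualBasis i))))) :
    (r12 * r13 - r13 * r12) + (r12 * r23 - r23 * r12) + (r13 * r23 - r23 * r13) = 0 := by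
  subst hr12 hr13 hr23
  letI : LieRing (UniversalEnvelopingAlgebra k D) := LieRing.ofAssociativeRing
  set ι' := UniversalEnvelopingAlgebra.ι k (L := D) with hι'
  set X : I → D := fun i => e.symm (b i, 0) with hX
  set F : I → D := fun i => e.symm (0, b.dualBasis i) with hF
  set u : I → UniversalEnvelopingAlgebra k D := fun i => ι' (X i) with hu
  set v : I → UniversalEnvelopingAlgebra k D := fun i => ι' (F i) with hv
  -- the three commutators in expanded form
  have h1 : (∑ i : I, (u i ⊗ₜ[k] (v i ⊗ₜ[k] (1 : UniversalEnvelopingAlgebra k D)))) *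
        (∑ i : I, (u i ⊗ₜ[k] ((1 : UniversalEnvelopingAlgebra k D) ⊗ₜ[k] v i))) -
      (∑ i : I, (u i ⊗ₜ[k] ((1 : UniversalEnvelopingAlgebra k D) ⊗ₜ[k] v i))) *
        (∑ i : I, (u i ⊗ₜ[k] (v i ⊗ₜ[k] (1 : UniversalEnvelopingAlgebra k D))))
      = ∑ i : I, ∑ j : I, (ι' ⁅X i, X j⁆ ⊗ₜ[k] (v i ⊗ₜ[k] v j)) := by
    rw [Finset.sum_mul_sum, Finset.sum_mul_sum]
    rw [show (∑ i : I, ∑ j : I,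
        (u i ⊗ₜ[k] ((1 : UniversalEnvelopingAlgebra k D) ⊗ₜ[k] v i)) *
          (u j ⊗ₜ[k] (v j ⊗ₜ[k] (1 : UniversalEnvelopingAlgebra k D))))
        = ∑ i : I, ∑ j : I,
        (u j ⊗ₜ[k] ((1 : UniversalEnvelopingAlgebra k D) ⊗ₜ[k] v j)) *
          (u i ⊗ₜ[k] (v i ⊗ₜ[k] (1 : UniversalEnvelopingAlgebra k D)))
      from Finset.sum_comm]
    rw [← Finset.sum_sub_distrib]
    refine Finset.sum_congr rfl fun i _ => ?_
    rw [← Finset.sum_sub_distrib]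
    refine Finset.sum_congr rfl fun j _ => ?_
    simp only [Algebra.TensorProduct.tmul_mul_tmul, one_mul, mul_one]
    rw [← TensorProduct.sub_tmul, ← Ring.lie_def, ← LieHom.map_lie]
  have h2 : (∑ i : I, (u i ⊗ₜ[k] (v i ⊗ₜ[k] (1 : UniversalEnvelopingAlgebra k D)))) *
        (∑ i : I, ((1 : UniversalEnvelopingAlgebra k D) ⊗ₜ[k] (u i ⊗ₜ[k] v i))) -
      (∑ i : I, ((1 : UniversalEnvelopingAlgebra k D) ⊗ₜ[k] (u i ⊗ₜ[k] v i))) *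
        (∑ i : I, (u i ⊗ₜ[k] (v i ⊗ₜ[k] (1 : UniversalEnvelopingAlgebra k D))))
      = ∑ i : I, ∑ j : I, (u i ⊗ₜ[k] (ι' ⁅F i, X j⁆ ⊗ₜ[k] v j)) := by
    rw [Finset.sum_mul_sum, Finset.sum_mul_sum]
    rw [show (∑ i : I, ∑ j : I,
        ((1 : UniversalEnvelopingAlgebra k D) ⊗ₜ[k] (u i ⊗ₜ[k] v i)) *
          (u j ⊗ₜ[k] (v j ⊗ₜ[k] (1 : UniversalEnvelopingAlgebra k D))))
        = ∑ i : I, ∑ j : I,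
        ((1 : UniversalEnvelopingAlgebra k D) ⊗ₜ[k] (u j ⊗ₜ[k] v j)) *
          (u i ⊗ₜ[k] (v i ⊗ₜ[k] (1 : UniversalEnvelopingAlgebra k D)))
      from Finset.sum_comm]
    rw [← Finset.sum_sub_distrib]
    refine Finset.sum_congr rfl fun i _ => ?_
    rw [← Finset.sum_sub_distrib]
    refine Finset.sum_congr rfl fun j _ => ?_
    simp only [Algebra.TensorProduct.tmul_mul_tmul, one_mul, mul_one]
    rw [← TensorProduct.tmul_sub, ← TensorProduct.sub_tmul, ← Ring.lie_def, ← LieHom.map_lie]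
  have h3 : (∑ i : I, (u i ⊗ₜ[k] ((1 : UniversalEnvelopingAlgebra k D) ⊗ₜ[k] v i))) *
        (∑ i : I, ((1 : UniversalEnvelopingAlgebra k D) ⊗ₜ[k] (u i ⊗ₜ[k] v i))) -
      (∑ i : I, ((1 : UniversalEnvelopingAlgebra k D) ⊗ₜ[k] (u i ⊗ₜ[k] v i))) *
        (∑ i : I, (u i ⊗ₜ[k] ((1 : UniversalEnvelopingAlgebra k D) ⊗ₜ[k] v i)))
      = ∑ i : I, ∑ j : I, (u i ⊗ₜ[k] (u j ⊗ₜ[k] ι' ⁅F i, F j⁆)) := by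
    rw [Finset.sum_mul_sum, Finset.sum_mul_sum]
    rw [show (∑ i : I, ∑ j : I,
        ((1 : UniversalEnvelopingAlgebra k D) ⊗ₜ[k] (u i ⊗ₜ[k] v i)) *
          (u j ⊗ₜ[k] ((1 : UniversalEnvelopingAlgebra k D) ⊗ₜ[k] v j)))
        = ∑ i : I, ∑ j : I,
        ((1 : UniversalEnvelopingAlgebra k D) ⊗ₜ[k] (u j ⊗ₜ[k] v j)) *
          (u i ⊗ₜ[k] ((1 : UniversalEnvelopingAlgebra k D) ⊗ₜ[k] v i))
      from Finset.sum_comm]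
    rw [← Finset.sum_sub_distrib]
    refine Finset.sum_congr rfl fun i _ => ?_
    rw [← Finset.sum_sub_distrib]
    refine Finset.sum_congr rfl fun j _ => ?_
    simp only [Algebra.TensorProduct.tmul_mul_tmul, one_mul, mul_one]
    rw [← TensorProduct.tmul_sub, ← TensorProduct.tmul_sub, ← Ring.lie_def, ← LieHom.map_lie]
  rw [h1, h2, h3]
  -- substitute bracket expansions
  have hXX : ∀ i j : I, ι' ⁅X i, X j⁆
      = ∑ kk : I, b.dualBasis kk ⁅b i, b j⁆ • u kk := by
    intro i j
    rw [hX]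
    rw [CYBE_LL_aux k L D e hL I b i j]
    show ι'.toLinearMap _ = _
    rw [map_sum]
    simp only [map_smul]
    rfl
  have hFF : ∀ i j : I, ι' ⁅F i, F j⁆
      = ∑ kk : I, bra (b.dualBasis i) (b.dualBasis j) (b kk) • v kk := by
    intro i j
    rw [hF]
    rw [CYBE_FF_aux k L D e bra hdual I b i j]
    show ι'.toLinearMap _ = _
    rw [map_sum]
    simp only [map_smul]
    rfl
  have hFX : ∀ i j : I, ι' ⁅F i, X j⁆
      = ∑ kk : I, bra (b.dualBasis kk) (b.dualBasis i) (b j) • u kk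
        + ∑ kk : I, b.dualBasis i ⁅b j, b kk⁆ • v kk := by
    intro i j
    rw [hF, hX]
    rw [CYBE_FL_aux k L D e hL bra hdual hinv I b i j]
    show ι'.toLinearMap _ = _
    rw [map_add, map_sum, map_sum]
    simp only [map_smul]
    rfl
  simp only [hXX, hFF, hFX]
  simp only [TensorProduct.sum_tmul, TensorProduct.tmul_sum, TensorProduct.add_tmul,
    TensorProduct.tmul_add, TensorProduct.smul_tmul, TensorProduct.tmul_smul,
    Finset.sum_add_distrib]
  -- now everything is triple sums of scalars • elementary tensors
  have braskew : ∀ f g : Module.Dual k L, bra f g = - bra g f := by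
    intro f g
    have h := hdual f g
    rw [← lie_skew, hdual g f, ← map_neg] at h
    have := e.symm.injective h.symm
    simpa using congrArg Prod.snd this
  have hS1 : ∑ i : I, ∑ j : I, ∑ kk : I,
        b.dualBasis kk ⁅b i, b j⁆ • (u kk ⊗ₜ[k] (v i ⊗ₜ[k] v j))
      = - ∑ i : I, ∑ j : I, ∑ kk : I,
        b.dualBasis i ⁅b j, b kk⁆ • (u i ⊗ₜ[k] (v kk ⊗ₜ[k] v j)) := by
    rw [CYBE_swap13 (fun i j kk => b.dualBasis kk ⁅b i, b j⁆ • (u kk ⊗ₜ[k] (v i ⊗ₜ[k] v j)))]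
    rw [← Finset.sum_neg_distrib]
    refine Finset.sum_congr rfl fun i _ => ?_
    rw [← Finset.sum_neg_distrib]
    refine Finset.sum_congr rfl fun j _ => ?_
    rw [← Finset.sum_neg_distrib]
    refine Finset.sum_congr rfl fun kk _ => ?_
    have hc : (b.dualBasis i) ⁅b kk, b j⁆ = -((b.dualBasis i) ⁅b j, b kk⁆) := by
      rw [← map_neg, lie_skew]
    rw [hc, TensorProduct.smul_tmul', TensorProduct.smul_tmul', neg_smul,
      ← TensorProduct.neg_tmul]
  have hS2 : ∑ i : I, ∑ j : I, ∑ kk : I,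
        bra (b.dualBasis kk) (b.dualBasis i) (b j) • (u i ⊗ₜ[k] (u kk ⊗ₜ[k] v j))
      = - ∑ i : I, ∑ j : I, ∑ kk : I,
        bra (b.dualBasis i) (b.dualBasis j) (b kk) • (u i ⊗ₜ[k] (u j ⊗ₜ[k] v kk)) := by
    rw [CYBE_swap23 (fun i j kk =>
      bra (b.dualBasis kk) (b.dualBasis i) (b j) • (u i ⊗ₜ[k] (u kk ⊗ₜ[k] v j)))]
    rw [← Finset.sum_neg_distrib]
    refine Finset.sum_congr rfl fun i _ => ?_
    rw [← Finset.sum_neg_distrib]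
    refine Finset.sum_congr rfl fun j _ => ?_
    rw [← Finset.sum_neg_distrib]
    refine Finset.sum_congr rfl fun kk _ => ?_
    have hc : (bra (b.dualBasis j) (b.dualBasis i)) (b kk)
        = -((bra (b.dualBasis i) (b.dualBasis j)) (b kk)) := by
      rw [braskew (b.dualBasis j) (b.dualBasis i), LinearMap.neg_apply]
    rw [hc, TensorProduct.smul_tmul', TensorProduct.smul_tmul', neg_smul,
      ← TensorProduct.neg_tmul]
  rw [hS1, hS2]
  abel
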